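/- Let X be a Banach space with the diametral strong diameter two property (DSD2P). Then X satisfies the slice characterization of the Daugavet property: for every norm-one functional x* ∈ X*, every α > 0, every ε > 0 and every x in the unit sphere S_X, there exists s ∈ B_X with Re x*(s) > 1 − α and ‖x − s‖ > 2 − ε. -/

import Mathlib

open Set

/-- The ballSlice `S(f, α)` of the closed unit ball of `X` determined by a functional `f`
and `α > 0`: the set of points `x` of the closed unit ball with `Re (f x) > 1 - α`. -/
def ballSlice {𝕜 : Type*} [RCLike 𝕜] {X : Type*} [NormedAddCommGroup X] [NormedSpace 𝕜 X]
    (f : X →L[𝕜] 𝕜) (α : ℝ) : Set X :=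
  {x : X | ‖x‖ ≤ 1 ∧ 1 - α < RCLike.re (f x)}

/-- `C` is a convex combination of slices of the closed unit ball of `X`:
`C = λ₁ S₁ + ⋯ + λₙ Sₙ` where `n ≥ 1`, each `Sᵢ = S(fᵢ, αᵢ)` is a ballSlice (with `‖fᵢ‖ = 1`,
`αᵢ > 0`), each `λᵢ > 0` and `∑ λᵢ = 1`. -/
def IsConvexCombOfSlices {𝕜 : Type*} [RCLike 𝕜] (X : Type*) [NormedAddCommGroup X]
    [NormedSpace 𝕜 X] (C : Set X) : Prop :=
  ∃ (n : ℕ), 0 < n ∧ ∃ (f : Fin n → (X →L[𝕜] 𝕜)) (α lam : Fin n → ℝ),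
    (∀ i, ‖f i‖ = 1) ∧ (∀ i, 0 < α i) ∧ (∀ i, 0 < lam i) ∧ (∑ i, lam i) = 1 ∧
    C = {x : X | ∃ y : Fin n → X, (∀ i, y i ∈ ballSlice (f i) (α i)) ∧
      x = ∑ i, (lam i : 𝕜) • y i}

/-- `X` has the diametral strong diameter two property (DSD2P): for every convex
combination of slices `C` of the closed unit ball, every `δ > 0` and every `x ∈ C`,
there is `y ∈ C` with `‖x - y‖ > 1 + ‖x‖ - δ`. -/
def DSD2P (𝕜 : Type*) [RCLike 𝕜] (X : Type*) [NormedAddCommGroup X]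
    [NormedSpace 𝕜 X] : Prop :=
  ∀ C : Set X, IsConvexCombOfSlices (𝕜 := 𝕜) X C →
    ∀ δ > (0 : ℝ), ∀ x ∈ C, ∃ y ∈ C, ‖x - y‖ > 1 + ‖x‖ - δ

section Aux

variable {𝕜 : Type*} [RCLike 𝕜] {X : Type*} [NormedAddCommGroup X] [NormedSpace 𝕜 X]

lemma aux_re_ofReal_mul (r : ℝ) (z : 𝕜) : RCLike.re ((r : 𝕜) * z) = r * RCLike.re z := by
  simp [RCLike.mul_re]

lemma aux_re_comb (φ : X →L[𝕜] 𝕜) (a b : ℝ) (v v' : X) :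
    RCLike.re (φ ((a : 𝕜) • v + (b : 𝕜) • v')) =
      a * RCLike.re (φ v) + b * RCLike.re (φ v') := by
  rw [map_add, map_smul, map_smul, smul_eq_mul, smul_eq_mul, map_add,
    aux_re_ofReal_mul, aux_re_ofReal_mul]

/-- A slice of the unit ball determined by a norm-one functional is nonempty. -/
lemma aux_slice_nonempty (f : X →L[𝕜] 𝕜) (hf : ‖f‖ = 1) {α : ℝ} (hα : 0 < α) :
    ∃ v : X, ‖v‖ ≤ 1 ∧ 1 - α < RCLike.re (f v) := by
  have hr : max (1 - α) 0 < ‖f‖ := by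
    rw [hf]; exact max_lt (by linarith) one_pos
  obtain ⟨v, hv1, hv2⟩ := f.exists_lt_apply_of_lt_opNorm hr
  have hfvpos : 0 < ‖f v‖ := lt_of_le_of_lt (le_max_right _ _) hv2
  have hfv0 : ‖f v‖ ≠ 0 := hfvpos.ne'
  refine ⟨((starRingEnd 𝕜) (f v) / (‖f v‖ : 𝕜)) • v, ?_, ?_⟩
  · have hnorm : ‖(starRingEnd 𝕜) (f v) / (‖f v‖ : 𝕜)‖ = 1 := by
      rw [norm_div, RCLike.norm_conj, RCLike.norm_ofReal, abs_of_nonneg (norm_nonneg _)]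
      field_simp
    rw [norm_smul, hnorm, one_mul]
    exact hv1.le
  · have : f (((starRingEnd 𝕜) (f v) / (‖f v‖ : 𝕜)) • v) = ((‖f v‖ : ℝ) : 𝕜) := by
      rw [map_smul, smul_eq_mul, div_mul_eq_mul_div, RCLike.conj_mul, sq,
        mul_div_assoc, div_self (by exact_mod_cast hfv0), mul_one]
    rw [this, RCLike.ofReal_re]
    calc 1 - α ≤ max (1 - α) 0 := le_max_left _ _
      _ < ‖f v‖ := hv2

end Aux

set_option maxHeartbeats 1000000 in
/-- If a Banach space `X` has the DSD2P, then it satisfies the slice characterization of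
the Daugavet property: for every norm-one functional `f`, every `α > 0`, every `ε > 0`
and every `x` of norm one, there is `s` in the closed unit ball with
`Re (f s) > 1 - α` and `‖x - s‖ > 2 - ε`. -/
theorem dsd2p_implies_slice_daugavet {𝕜 : Type*} [RCLike 𝕜] {X : Type*}
    [NormedAddCommGroup X] [NormedSpace 𝕜 X] [CompleteSpace X]
    (h : DSD2P 𝕜 X) (f : X →L[𝕜] 𝕜) (hf : ‖f‖ = 1) (α : ℝ) (hα : 0 < α)
    (ε : ℝ) (hε : 0 < ε) (x : X) (hx : ‖x‖ = 1) :
    ∃ s : X, ‖s‖ ≤ 1 ∧ 1 - α < RCLike.re (f s) ∧ 2 - ε < ‖x - s‖ := by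
  classical
  set e : ℝ := min ε 1 with he_def
  have he0 : 0 < e := lt_min hε one_pos
  have he1 : e ≤ 1 := min_le_right _ _
  have heε : e ≤ ε := min_le_left _ _
  set t : ℝ := e / 8 with ht_def
  set δ : ℝ := e ^ 2 / 64 with hδ_def
  have ht0 : 0 < t := by positivity
  have ht18 : t ≤ 1 / 8 := by rw [ht_def]; linarith
  have hδ0 : 0 < δ := by positivity
  have hδt : δ = t * (e / 8) := by rw [hδ_def, ht_def]; ring
  have hδ1 : δ ≤ 1 / 64 := by rw [hδ_def]; nlinarith
  -- norming functional for x
  have hx0 : x ≠ 0 := by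
    intro h0; rw [h0, norm_zero] at hx; linarith
  obtain ⟨g, hg1, hgx⟩ := exists_dual_vector 𝕜 x (norm_ne_zero_iff.mpr hx0)
  -- a point in the slice S(f, α)
  obtain ⟨s₀, hs₀n, hs₀⟩ := aux_slice_nonempty f hf hα
  -- the convex combination of slices
  set lam : Fin 2 → ℝ := ![1 - t, t] with hlam_def
  set F : Fin 2 → (X →L[𝕜] 𝕜) := ![g, f] with hF_def
  set A : Fin 2 → ℝ := ![α, α] with hA_def
  set C : Set X := {w : X | ∃ y : Fin 2 → X, (∀ i, y i ∈ ballSlice (F i) (A i)) ∧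
      w = ∑ i, ((lam i : 𝕜)) • y i} with hC_def
  have hCslice : IsConvexCombOfSlices (𝕜 := 𝕜) X C := by
    refine ⟨2, two_pos, F, A, lam, ?_, ?_, ?_, ?_, rfl⟩
    · intro i; fin_cases i <;> simp [hF_def, hg1, hf]
    · intro i; fin_cases i <;> simpa [hA_def] using hα
    · intro i; fin_cases i <;> simp [hlam_def] <;> linarith
    · simp [hlam_def, Fin.sum_univ_two]
  -- the base point z
  set z : X := ((1 - t : ℝ) : 𝕜) • x + ((t : ℝ) : 𝕜) • s₀ with hz_def
  have hxslice : x ∈ ballSlice g α := by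
    refine ⟨hx.le, ?_⟩
    rw [hgx, RCLike.ofReal_re, hx]; linarith
  have hs₀slice : s₀ ∈ ballSlice f α := ⟨hs₀n, hs₀⟩
  have hzC : z ∈ C := by
    refine ⟨![x, s₀], ?_, ?_⟩
    · intro i
      fin_cases i
      · simpa [hF_def, hA_def] using hxslice
      · simpa [hF_def, hA_def] using hs₀slice
    · simp [hz_def, Fin.sum_univ_two, hlam_def]
  -- norm of z is at least 1 - 2t
  have hznorm : 1 - 2 * t ≤ ‖z‖ := by
    have hz_eq : z = x + ((t : ℝ) : 𝕜) • (s₀ - x) := by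
      rw [hz_def]; push_cast; module
    have h1 : ‖((t : ℝ) : 𝕜) • (s₀ - x)‖ = t * ‖s₀ - x‖ := by
      rw [norm_smul, RCLike.norm_ofReal, abs_of_pos ht0]
    have h2 : ‖s₀ - x‖ ≤ 2 := by
      calc ‖s₀ - x‖ ≤ ‖s₀‖ + ‖x‖ := norm_sub_le _ _
        _ ≤ 2 := by rw [hx]; linarith
    have h3 : ‖x‖ ≤ ‖z‖ + ‖((t : ℝ) : 𝕜) • (s₀ - x)‖ := by
      calc ‖x‖ = ‖z - ((t : ℝ) : 𝕜) • (s₀ - x)‖ := by rw [hz_eq]; congr 1; abel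
        _ ≤ ‖z‖ + ‖((t : ℝ) : 𝕜) • (s₀ - x)‖ := norm_sub_le _ _
    have h4 : t * ‖s₀ - x‖ ≤ t * 2 := mul_le_mul_of_nonneg_left h2 ht0.le
    rw [h1, hx] at h3; linarith
  -- apply DSD2P
  obtain ⟨y, hyC, hy⟩ := h C hCslice δ hδ0 z hzC
  obtain ⟨w, hw, hy_eq⟩ := hyC
  set u : X := w 0 with hu_def
  set s : X := w 1 with hs_def
  have huslice : u ∈ ballSlice g α := by simpa [hF_def, hA_def, hu_def] using hw 0
  have hsslice : s ∈ ballSlice f α := by simpa [hF_def, hA_def, hs_def] using hw 1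
  have hy_eq' : y = ((1 - t : ℝ) : 𝕜) • u + ((t : ℝ) : 𝕜) • s := by
    rw [hy_eq]; simp [Fin.sum_univ_two, hlam_def, hu_def, hs_def]
  have hynorm : ‖y‖ ≤ 1 := by
    rw [hy_eq']
    calc ‖((1 - t : ℝ) : 𝕜) • u + ((t : ℝ) : 𝕜) • s‖
        ≤ ‖((1 - t : ℝ) : 𝕜) • u‖ + ‖((t : ℝ) : 𝕜) • s‖ := norm_add_le _ _
      _ = (1 - t) * ‖u‖ + t * ‖s‖ := by
          rw [norm_smul, norm_smul, RCLike.norm_ofReal, RCLike.norm_ofReal,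
            abs_of_pos ht0, abs_of_nonneg (by linarith : (0:ℝ) ≤ 1 - t)]
      _ ≤ (1 - t) * 1 + t * 1 := by
          gcongr
          · linarith
          · exact huslice.1
          · exact hsslice.1
      _ = 1 := by ring
  -- norming functional for z - y
  have hzy_pos : 0 < ‖z - y‖ := by linarith [hy, hznorm, hδ1, ht18]
  obtain ⟨φ, hφ1, hφzy⟩ := exists_dual_vector 𝕜 (z - y)
    (fun h0 => by rw [h0] at hzy_pos; exact lt_irrefl _ hzy_pos)
  have hr_le : ∀ v : X, |RCLike.re (φ v)| ≤ ‖v‖ := by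
    intro v
    calc |RCLike.re (φ v)| ≤ ‖φ v‖ := RCLike.abs_re_le_norm _
      _ ≤ ‖φ‖ * ‖v‖ := φ.le_opNorm v
      _ = ‖v‖ := by rw [hφ1, one_mul]
  have hrzy : RCLike.re (φ (z - y)) = ‖z - y‖ := by rw [hφzy, RCLike.ofReal_re]
  have hr_sub : RCLike.re (φ (z - y)) = RCLike.re (φ z) - RCLike.re (φ y) := by
    rw [map_sub, map_sub]
  -- Re φ z is large
  have hrz_lower : ‖z‖ - δ < RCLike.re (φ z) := by
    have h2 := abs_le.mp (hr_le y)
    have h3 : RCLike.re (φ z) = ‖z - y‖ + RCLike.re (φ y) := by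
      linarith [hr_sub, hrzy]
    rw [h3]; linarith [hy, h2.1, hynorm]
  have hrz_upper : RCLike.re (φ z) ≤ ‖z‖ := le_trans (le_abs_self _) (hr_le z)
  -- Re φ x is close to 1
  have hrx : 1 - 3 * t - δ < RCLike.re (φ x) := by
    have h1 : RCLike.re (φ z) = (1 - t) * RCLike.re (φ x) + t * RCLike.re (φ s₀) := by
      rw [hz_def]; exact aux_re_comb φ (1 - t) t x s₀
    have h2 : RCLike.re (φ s₀) ≤ 1 := by
      have := le_trans (le_abs_self _) (hr_le s₀); linarith
    have h2' : t * RCLike.re (φ s₀) ≤ t * 1 := mul_le_mul_of_nonneg_left h2 ht0.le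
    have h3 : (1 - t) * RCLike.re (φ x) > 1 - 3 * t - δ := by
      linarith [h1, hrz_lower, hznorm, h2']
    have h4 : (0:ℝ) < 1 - 3 * t - δ := by linarith [ht18, hδ1]
    rcases le_or_gt (RCLike.re (φ x)) 0 with hc | hc
    · exfalso
      have : (1 - t) * RCLike.re (φ x) ≤ 0 :=
        mul_nonpos_of_nonneg_of_nonpos (by linarith) hc
      linarith
    · have h5 : 0 < t * RCLike.re (φ x) := mul_pos ht0 hc
      linarith
  -- -Re φ s is close to 1
  have hrs : 1 - e / 8 < -(RCLike.re (φ s)) := by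
    have h1 : (1 : ℝ) - δ < -(RCLike.re (φ y)) := by
      have := hr_sub; rw [hrzy] at this
      linarith [hy, hrz_upper]
    have h2 : RCLike.re (φ y) = (1 - t) * RCLike.re (φ u) + t * RCLike.re (φ s) := by
      rw [hy_eq']; exact aux_re_comb φ (1 - t) t u s
    have h3 : -(RCLike.re (φ u)) ≤ 1 := by
      have := abs_le.mp (hr_le u); linarith [huslice.1]
    have h3' : (1 - t) * (-(RCLike.re (φ u))) ≤ (1 - t) * 1 :=
      mul_le_mul_of_nonneg_left h3 (by linarith)
    have h4 : t * (-(RCLike.re (φ s))) > t - δ := by linarith [h1, h2, h3']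
    rw [hδt] at h4
    have h5 : t * (1 - e / 8) < t * (-(RCLike.re (φ s))) := by linarith [h4]
    exact (mul_lt_mul_iff_right₀ ht0).mp h5
  -- conclusion
  refine ⟨s, hsslice.1, hsslice.2, ?_⟩
  have hfinal : RCLike.re (φ x) - RCLike.re (φ s) ≤ ‖x - s‖ := by
    have := le_trans (le_abs_self _) (hr_le (x - s))
    rw [map_sub, map_sub] at this; linarith
  have hee : e ^ 2 ≤ e := by
    rw [sq]
    calc e * e ≤ e * 1 := mul_le_mul_of_nonneg_left he1 he0.le
      _ = e := mul_one e
  have key : 2 - e < ‖x - s‖ := by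
    linarith [hfinal, hrx, hrs, hee, ht_def, hδ_def]
  linarith
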